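/- With the setup of the previous statement, for every integer k ≥ 2, Var(Y_k^{(γ,ω)}) < Var(Y_k^{(γ+ω,0)}) whenever ω > 0. -/

import Mathlib

open Real MeasureTheory ProbabilityTheory


set_option linter.unusedSectionVars false
set_option linter.unreachableTactic false
set_option linter.unusedTactic false

lemma bern_sum1 (k : ℕ) (p : ℝ) :
    ∑ y ∈ Finset.range (k + 1), (y : ℝ) * ((k.choose y : ℝ) * p ^ y * (1 - p) ^ (k - y))
      = k * p := by
  have h := congrArg (Polynomial.eval p) (bernsteinPolynomial.sum_smul ℝ k)
  simpa [bernsteinPolynomial, Polynomial.eval_finset_sum, mul_assoc] using h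

lemma bern_sum2 (k : ℕ) (p : ℝ) :
    ∑ y ∈ Finset.range (k + 1), (y : ℝ)^2 * ((k.choose y : ℝ) * p ^ y * (1 - p) ^ (k - y))
      = k * p + ((k * (k-1) : ℕ) : ℝ) * p^2 := by
  have h := congrArg (Polynomial.eval p) (bernsteinPolynomial.sum_mul_smul ℝ k)
  have h2 : ∑ y ∈ Finset.range (k + 1),
      ((y * (y-1) : ℕ) : ℝ) * ((k.choose y : ℝ) * p ^ y * (1 - p) ^ (k - y))
      = ((k * (k-1) : ℕ) : ℝ) * p^2 := by
    simpa [bernsteinPolynomial, Polynomial.eval_finset_sum, mul_assoc] using h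
  have h1 := bern_sum1 k p
  have key : ∀ y : ℕ, ((y * (y-1) : ℕ) : ℝ) = (y:ℝ)^2 - y := by
    intro y
    cases y with
    | zero => simp
    | succ n => push_cast [Nat.succ_sub_one]; ring
  calc ∑ y ∈ Finset.range (k + 1), (y : ℝ)^2 * ((k.choose y : ℝ) * p ^ y * (1 - p) ^ (k - y))
      = ∑ y ∈ Finset.range (k + 1),
        (((y * (y-1) : ℕ) : ℝ) * ((k.choose y : ℝ) * p ^ y * (1 - p) ^ (k - y))
          + (y : ℝ) * ((k.choose y : ℝ) * p ^ y * (1 - p) ^ (k - y))) := by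
        refine Finset.sum_congr rfl fun y _ => ?_
        rw [key y]; ring
    _ = ((k * (k-1) : ℕ) : ℝ) * p^2 + k * p := by rw [Finset.sum_add_distrib, h2, h1]
    _ = k * p + ((k * (k-1) : ℕ) : ℝ) * p^2 := by ring

lemma exp_mgf {r s : ℝ} (hr : 0 < r) (hs : 0 ≤ s) :
    ∫ x, Real.exp (-(s * x)) ∂(expMeasure r) = r / (r + s) := by
  have hrs : 0 < r + s := by linarith
  have hmeas : Measurable fun x : ℝ => Real.exp (-(s * x)) := by fun_prop
  have hμ : expMeasure r = MeasureTheory.volume.withDensity (exponentialPDF r) := rfl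
  have hpdfm : Measurable (exponentialPDF r) :=
    (measurable_exponentialPDFReal r).ennreal_ofReal
  have hpdfm' : Measurable (exponentialPDF (r + s)) :=
    (measurable_exponentialPDFReal (r + s)).ennreal_ofReal
  rw [hμ, integral_eq_lintegral_of_nonneg_ae (ae_of_all _ fun x => (Real.exp_pos _).le)
    hmeas.aestronglyMeasurable,
    lintegral_withDensity_eq_lintegral_mul _ hpdfm (hmeas.ennreal_ofReal)]
  have key : ∀ x : ℝ, (exponentialPDF r * fun x => ENNReal.ofReal (Real.exp (-(s * x)))) x
      = ENNReal.ofReal (r / (r + s)) * exponentialPDF (r + s) x := by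
    intro x
    rcases le_or_gt 0 x with hx | hx
    · simp only [Pi.mul_apply, exponentialPDF_of_nonneg hx]
      rw [← ENNReal.ofReal_mul (by positivity), ← ENNReal.ofReal_mul (by positivity)]
      congr 1
      rw [show -((r + s) * x) = -(r * x) + -(s * x) by ring, Real.exp_add]
      field_simp
    · simp only [Pi.mul_apply, exponentialPDF_of_neg hx, zero_mul, mul_zero]
  rw [lintegral_congr key, lintegral_const_mul _ hpdfm',
    lintegral_exponentialPDF_eq_one hrs, mul_one, ENNReal.toReal_ofReal (by positivity)]

lemma exp_mgf_comp {Ω : Type*} [MeasureSpace Ω] {X : Ω → ℝ} (hX : Measurable X) {r : ℝ}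
    (hr : 0 < r) (hd : Measure.map X ℙ = expMeasure r) {s : ℝ} (hs : 0 ≤ s) :
    ∫ a, Real.exp (-(s * X a)) ∂ℙ = r / (r + s) := by

  have hmeas : Measurable fun x : ℝ => Real.exp (-(s * x)) := by fun_prop
  have h := integral_map (μ := ℙ) hX.aemeasurable
    (f := fun x => Real.exp (-(s * x))) hmeas.aestronglyMeasurable
  rw [hd, exp_mgf hr hs] at h
  exact h.symm


lemma ae_nonneg_of_map_exp {Ω : Type*} [MeasureSpace Ω] {X : Ω → ℝ} (hX : Measurable X) {r : ℝ}
    (hd : Measure.map X ℙ = expMeasure r) : ∀ᵐ a ∂ℙ, 0 ≤ X a := by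

  have h0 : (expMeasure r) (Set.Iio 0) = 0 := by
    rw [show expMeasure r = MeasureTheory.volume.withDensity (exponentialPDF r) from rfl,
      withDensity_apply _ measurableSet_Iio]
    exact lintegral_exponentialPDF_of_nonpos le_rfl
  have h1 : ℙ (X ⁻¹' Set.Iio 0) = 0 := by
    rw [← Measure.map_apply hX measurableSet_Iio, hd, h0]
  rw [ae_iff]
  convert h1 using 2
  ext a
  simp [not_le]

lemma mbin_moments {Ω : Type*} [MeasureSpace Ω] [IsProbabilityMeasure (ℙ : Measure Ω)] {X : Ω → ℝ} (hX : Measurable X) {r : ℝ} (hr : 0 < r)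
    (hd : Measure.map X ℙ = expMeasure r)
    {c s : ℝ} (hc0 : 0 < c) (hc1 : c ≤ 1) (hs : 0 < s)
    {Q : Ω → ℝ} (hQ : ∀ a, Q a = c * (1 - Real.exp (-(s * X a))))
    (k : ℕ) (pq : ℕ → ℝ)
    (hpq : ∀ y, pq y = ∫ a, (k.choose y : ℝ) * Q a ^ y * (1 - Q a) ^ (k - y) ∂ℙ) :
    (∑ y ∈ Finset.range (k+1), (y:ℝ) * pq y = k * (c * s / (r + s))) ∧
    (∑ y ∈ Finset.range (k+1), (y:ℝ)^2 * pq y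
      = k * (c * s / (r + s))
        + ((k*(k-1) : ℕ) : ℝ) * (c^2 * (2*s^2 / ((r+s)*(r+2*s))))) := by
  have hQm : Measurable Q := by
    have : Q = fun a => c * (1 - Real.exp (-(s * X a))) := funext hQ
    rw [this]; fun_prop
  -- a.e. bounds
  have hX0 := ae_nonneg_of_map_exp hX hd
  have hQ01 : ∀ᵐ a ∂ℙ, 0 ≤ Q a ∧ Q a ≤ 1 := by
    filter_upwards [hX0] with a ha
    have he1 : Real.exp (-(s * X a)) ≤ 1 := by
      apply Real.exp_le_one_iff.mpr; nlinarith
    have he0 : 0 < Real.exp (-(s * X a)) := Real.exp_pos _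
    rw [hQ a]
    constructor
    · nlinarith
    · nlinarith
  -- integrability of bernstein terms
  have intB : ∀ (C : ℝ) (m n : ℕ), Integrable (fun a => C * Q a ^ m * (1 - Q a) ^ n) ℙ := by
    intro C m n
    have hm : Measurable fun a => C * Q a ^ m * (1 - Q a) ^ n :=
      ((measurable_const.mul (hQm.pow_const m)).mul ((measurable_const.sub hQm).pow_const n))
    refine (integrable_const |C|).mono' hm.aestronglyMeasurable ?_
    filter_upwards [hQ01] with a ⟨h0, h1⟩
    have hq : |Q a| ≤ 1 := abs_le.mpr ⟨by linarith, h1⟩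
    have hq' : |1 - Q a| ≤ 1 := abs_le.mpr ⟨by linarith, by linarith⟩
    calc ‖C * Q a ^ m * (1 - Q a) ^ n‖ = |C| * |Q a| ^ m * |1 - Q a| ^ n := by
          simp [abs_mul, abs_pow]
      _ ≤ |C| * 1 ^ m * 1 ^ n := by
          gcongr <;> positivity
      _ = |C| := by simp
  -- integrability of exp terms
  have intE : ∀ t : ℝ, 0 ≤ t → Integrable (fun a => Real.exp (-(t * X a))) ℙ := by
    intro t ht
    have hm : Measurable fun a => Real.exp (-(t * X a)) := ((hX.const_mul t).neg).exp
    refine (integrable_const (1:ℝ)).mono' hm.aestronglyMeasurable ?_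
    filter_upwards [hX0] with a ha
    rw [Real.norm_eq_abs, abs_of_pos (Real.exp_pos _)]
    apply Real.exp_le_one_iff.mpr; nlinarith
  have intQ : Integrable Q ℙ := by
    refine (integrable_const (1:ℝ)).mono' hQm.aestronglyMeasurable ?_
    filter_upwards [hQ01] with a ⟨h0, h1⟩
    rw [Real.norm_eq_abs, abs_of_nonneg h0]; exact h1
  have intQ2 : Integrable (fun a => Q a ^ 2) ℙ := by
    refine (integrable_const (1:ℝ)).mono' (hQm.pow_const 2).aestronglyMeasurable ?_
    filter_upwards [hQ01] with a ⟨h0, h1⟩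
    rw [Real.norm_eq_abs, abs_of_nonneg (by positivity)]
    nlinarith
  -- first moment
  have E1 : ∫ a, Q a ∂ℙ = c * s / (r + s) := by
    have : ∫ a, Q a ∂ℙ = ∫ a, c * (1 - Real.exp (-(s * X a))) ∂ℙ := by
      congr 1; funext a; exact hQ a
    rw [this, integral_const_mul, integral_sub (integrable_const 1) (intE s hs.le),
      integral_const, exp_mgf_comp hX hr hd hs.le]
    simp only [measure_univ, probReal_univ, ENNReal.toReal_one, smul_eq_mul, one_mul]
    have h1 : r + s ≠ 0 := by positivity
    field_simp
    ring
  -- second moment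
  have E2 : ∫ a, Q a ^ 2 ∂ℙ = c^2 * (2*s^2 / ((r+s)*(r+2*s))) := by
    have expand : ∀ a, Q a ^ 2
        = c^2 - 2*c^2 * Real.exp (-(s * X a)) + c^2 * Real.exp (-((2*s) * X a)) := by
      intro a
      rw [hQ a, show -(2*s*X a) = -(s*X a) + -(s*X a) by ring, Real.exp_add]
      ring
    have : ∫ a, Q a ^ 2 ∂ℙ
        = ∫ a, (c^2 - 2*c^2 * Real.exp (-(s * X a)) + c^2 * Real.exp (-((2*s) * X a))) ∂ℙ := by
      congr 1; funext a; exact expand a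
    have ia : Integrable (fun a => c^2 - 2*c^2 * Real.exp (-(s * X a))) ℙ := by
      exact (integrable_const _).sub ((intE s hs.le).const_mul _)
    have ib : Integrable (fun a => c^2 * Real.exp (-((2*s) * X a))) ℙ :=
      (intE (2*s) (by linarith)).const_mul _
    have ic : Integrable (fun a => 2*c^2 * Real.exp (-(s * X a))) ℙ :=
      (intE s hs.le).const_mul _
    rw [this, integral_add ia ib,
      integral_sub (integrable_const _) ic,
      integral_const, integral_const_mul, integral_const_mul,
      exp_mgf_comp hX hr hd hs.le, exp_mgf_comp hX hr hd (by linarith : (0:ℝ) ≤ 2*s)]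
    simp only [measure_univ, probReal_univ, ENNReal.toReal_one, smul_eq_mul, one_mul]
    have h1 : r + s ≠ 0 := by positivity
    have h2 : r + 2*s ≠ 0 := by positivity
    field_simp
    try ring
  constructor
  · calc ∑ y ∈ Finset.range (k+1), (y:ℝ) * pq y
        = ∫ a, (k:ℝ) * Q a ∂ℙ := by
          simp_rw [hpq, ← integral_const_mul]
          rw [← integral_finset_sum _ (fun y _ => ((intB _ y (k-y)).const_mul _))]
          refine integral_congr_ae (ae_of_all _ fun a => ?_)
          simpa [mul_assoc] using bern_sum1 k (Q a)
      _ = k * (c * s / (r + s)) := by rw [integral_const_mul, E1]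
  · calc ∑ y ∈ Finset.range (k+1), (y:ℝ)^2 * pq y
        = ∫ a, ((k:ℝ) * Q a + ((k*(k-1) : ℕ) : ℝ) * Q a ^ 2) ∂ℙ := by
          simp_rw [hpq, ← integral_const_mul]
          rw [← integral_finset_sum _ (fun y _ => ((intB _ y (k-y)).const_mul _))]
          refine integral_congr_ae (ae_of_all _ fun a => ?_)
          simpa [mul_assoc] using bern_sum2 k (Q a)
      _ = k * (c * s / (r + s))
          + ((k*(k-1) : ℕ) : ℝ) * (c^2 * (2*s^2 / ((r+s)*(r+2*s)))) := by
          rw [integral_add (intQ.const_mul _) (intQ2.const_mul _),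
            integral_const_mul, integral_const_mul, E1, E2]

/-- For `k ≥ 2` and `ω > 0`, the variance of
`Y_k^{(γ,ω)} ~ MBin(k, (β/(β+ω))(1−e^{-(β+ω)I}))`, `I ~ Exp(γ)`, is strictly
smaller than that of `Y_k^{(γ+ω,0)} ~ MBin(k, 1−e^{-βI*})`, `I* ~ Exp(γ+ω)`. -/
theorem stmt_9 {Ω : Type*} [MeasureSpace Ω] [IsProbabilityMeasure (ℙ : Measure Ω)]
    (β γ ω : ℝ) (hβ : 0 < β) (hγ : 0 < γ) (hω : 0 < ω)
    (k : ℕ) (hk : 2 ≤ k)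
    (I Istar : Ω → ℝ) (hI : Measurable I) (hIstar : Measurable Istar)
    (hIdist : Measure.map I ℙ = expMeasure γ)
    (hIstardist : Measure.map Istar ℙ = expMeasure (γ + ω))
    (P Pstar : Ω → ℝ)
    (hP : ∀ a, P a = β / (β + ω) * (1 - exp (-(β + ω) * I a)))
    (hPstar : ∀ a, Pstar a = 1 - exp (-β * Istar a))
    (pY pYstar : ℕ → ℝ)
    (hpY : ∀ y, pY y =
      ∫ a, (k.choose y : ℝ) * P a ^ y * (1 - P a) ^ (k - y) ∂ℙ)
    (hpYstar : ∀ y, pYstar y =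
      ∫ a, (k.choose y : ℝ) * Pstar a ^ y * (1 - Pstar a) ^ (k - y) ∂ℙ) :
    (∑ y ∈ Finset.range (k + 1), (y : ℝ) ^ 2 * pY y)
        - (∑ y ∈ Finset.range (k + 1), (y : ℝ) * pY y) ^ 2
      < (∑ y ∈ Finset.range (k + 1), (y : ℝ) ^ 2 * pYstar y)
        - (∑ y ∈ Finset.range (k + 1), (y : ℝ) * pYstar y) ^ 2 := by
  have hβω : 0 < β + ω := by linarith
  have hc0 : 0 < β / (β + ω) := by positivity
  have hc1 : β / (β + ω) ≤ 1 := by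
    rw [div_le_one hβω]; linarith
  have hQ : ∀ a, P a = β / (β + ω) * (1 - Real.exp (-((β + ω) * I a))) := by
    intro a; rw [hP a, neg_mul]
  have hQ' : ∀ a, Pstar a = 1 * (1 - Real.exp (-(β * Istar a))) := by
    intro a; rw [hPstar a, neg_mul, one_mul]
  obtain ⟨m1, m2⟩ := mbin_moments hI hγ hIdist hc0 hc1 hβω hQ k pY hpY
  obtain ⟨m1', m2'⟩ := mbin_moments hIstar (by linarith : (0:ℝ) < γ + ω) hIstardist
    one_pos le_rfl hβ hQ' k pYstar hpYstar
  rw [m1, m2, m1', m2']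
  set K : ℝ := ((k*(k-1) : ℕ) : ℝ) with hKdef
  have hK : 0 < K := by
    have : 0 < k * (k - 1) := Nat.mul_pos (by omega) (by omega)
    rw [hKdef]; exact_mod_cast this
  have hA : 0 < γ + β + ω := by linarith
  have hE : β / (β + ω) * (β + ω) / (γ + (β + ω)) = 1 * β / (γ + ω + β) := by
    rw [div_mul_cancel₀ _ hβω.ne', one_mul]
    congr 1; ring
  -- compute the two second-moment contributions
  have hVlt : (β / (β + ω))^2 * (2*(β+ω)^2 / ((γ+(β+ω))*(γ+2*(β+ω))))
      < 1^2 * (2*β^2 / ((γ+ω+β)*(γ+ω+2*β))) := by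
    have e1 : (β / (β + ω))^2 * (2*(β+ω)^2 / ((γ+(β+ω))*(γ+2*(β+ω))))
        = 2*β^2 / ((γ+β+ω)*(γ+2*β+2*ω)) := by
      field_simp; ring
    have e2 : 1^2 * (2*β^2 / ((γ+ω+β)*(γ+ω+2*β)))
        = 2*β^2 / ((γ+β+ω)*(γ+ω+2*β)) := by
      ring_nf
    rw [e1, e2]
    apply div_lt_div_of_pos_left (by positivity) (by positivity)
    have : γ + ω + 2*β < γ + 2*β + 2*ω := by linarith
    nlinarith
  have hEeq : (k:ℝ) * (β / (β + ω) * (β + ω) / (γ + (β + ω)))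
      = (k:ℝ) * (1 * β / (γ + ω + β)) := by rw [hE]
  have hKV : K * ((β / (β + ω))^2 * (2*(β+ω)^2 / ((γ+(β+ω))*(γ+2*(β+ω)))))
      < K * (1^2 * (2*β^2 / ((γ+ω+β)*(γ+ω+2*β)))) :=
    (mul_lt_mul_iff_right₀ hK).mpr hVlt
  have hEsq : ((k:ℝ) * (β / (β + ω) * (β + ω) / (γ + (β + ω))))^2
      = ((k:ℝ) * (1 * β / (γ + ω + β)))^2 := by rw [hEeq]
  linarith [hKV, hEeq, hEsq]
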